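/- Let $G(k)$ be the graph obtained from a graph $G$ by attaching $k$ new pendant vertices to each vertex of $G$. Then the Ising partition functions satisfy $Z_I(G(k),\beta,\lambda) = (1 + \beta\lambda)^{nk}\, Z_I\left(G, \beta, \lambda\left(\frac{\beta+\lambda}{1+\beta\lambda}\right)^k\right)$, where $n$ is the number of vertices of $G$, $0 < \beta \le 1$, and $\lambda > 0$. -/

import Mathlib

/-- Boolean adjacency for the graph `G(k)` obtained from `G` by attaching `k` new
pendant vertices to each vertex of `G`. -/
def pendantAdjB {V : Type*} [DecidableEq V] (G : SimpleGraph V) [DecidableRel G.Adj]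
    (k : ℕ) : V ⊕ V × Fin k → V ⊕ V × Fin k → Bool
  | Sum.inl u, Sum.inl v => decide (G.Adj u v)
  | Sum.inl v, Sum.inr (w, _) => decide (v = w)
  | Sum.inr (w, _), Sum.inl v => decide (v = w)
  | Sum.inr _, Sum.inr _ => false

/-- The graph `G(k)`: `G` with `k` new pendant vertices attached to each vertex. -/
def pendant {V : Type*} [DecidableEq V] (G : SimpleGraph V) [DecidableRel G.Adj]
    (k : ℕ) : SimpleGraph (V ⊕ V × Fin k) where
  Adj a b := pendantAdjB G k a b = true
  symm := by
    constructor
    intro a b h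
    rcases a with u | ⟨u, i⟩ <;> rcases b with v | ⟨v, j⟩ <;>
      simp_all [pendantAdjB, eq_comm, G.adj_comm]
  loopless := by
    constructor
    intro a
    rcases a with u | ⟨u, i⟩ <;> simp [pendantAdjB]

instance {V : Type*} [DecidableEq V] (G : SimpleGraph V) [DecidableRel G.Adj]
    (k : ℕ) : DecidableRel (pendant G k).Adj := fun _ _ =>
  inferInstanceAs (Decidable (_ = true))

/-- Number of edges of `G` whose endpoints receive different spins under `σ`
(each unordered edge corresponds to exactly two ordered pairs, hence the `/ 2`). -/
def disagreements {V : Type*} [Fintype V] (G : SimpleGraph V) [DecidableRel G.Adj]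
    (σ : V → Bool) : ℕ :=
  (Finset.univ.filter (fun p : V × V => G.Adj p.1 p.2 ∧ σ p.1 ≠ σ p.2)).card / 2

/-- Number of vertices assigned spin `+` (encoded as `true`). -/
def plusCount {V : Type*} [Fintype V] (σ : V → Bool) : ℕ :=
  (Finset.univ.filter (fun v => σ v = true)).card

/-- The Ising partition function `Z_I(G, β, λ) = ∑_σ β^{d(σ)} λ^{p(σ)}`. -/
noncomputable def isingZ {V : Type*} [Fintype V] [DecidableEq V] (G : SimpleGraph V)
    [DecidableRel G.Adj] (β lam : ℝ) : ℝ :=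
  ∑ σ : V → Bool, β ^ disagreements G σ * lam ^ plusCount σ

open Finset in
lemma disagree_pendant {V : Type*} [Fintype V] [DecidableEq V] (G : SimpleGraph V)
    [DecidableRel G.Adj] (k : ℕ) (σ : V → Bool) (τ : V × Fin k → Bool) :
    disagreements (pendant G k) (Sum.elim σ τ) =
      disagreements G σ + (univ.filter (fun x : V × Fin k => τ x ≠ σ x.1)).card := by
  unfold disagreements
  have hm : (univ.filter (fun p : (V ⊕ V × Fin k) × (V ⊕ V × Fin k) =>
      (pendant G k).Adj p.1 p.2 ∧ Sum.elim σ τ p.1 ≠ Sum.elim σ τ p.2)).card =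
      (univ.filter (fun p : V × V => G.Adj p.1 p.2 ∧ σ p.1 ≠ σ p.2)).card +
      2 * (univ.filter (fun x : V × Fin k => τ x ≠ σ x.1)).card := by
    simp only [Finset.card_filter, Fintype.sum_prod_type, Fintype.sum_sum_type]
    simp [pendant, pendantAdjB, ite_and, Finset.sum_ite_eq, Finset.sum_ite_eq',
      two_mul, ne_comm]
    rw [Finset.sum_add_distrib]; ring
  rw [hm]
  omega

open Finset in
lemma plus_pendant {V : Type*} [Fintype V] [DecidableEq V] (k : ℕ)
    (σ : V → Bool) (τ : V × Fin k → Bool) :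
    plusCount (Sum.elim σ τ) = plusCount σ + plusCount τ := by
  unfold plusCount
  simp only [Finset.card_filter, Fintype.sum_sum_type]
  simp
  rw [Finset.card_filter, Finset.card_filter]
  rfl

theorem stmt_19 {V : Type*} [Fintype V] [DecidableEq V] (G : SimpleGraph V)
    [DecidableRel G.Adj] (k : ℕ) (β lam : ℝ) (hβ0 : 0 < β) (hβ1 : β ≤ 1)
    (hlam : 0 < lam) :
    isingZ (pendant G k) β lam =
      (1 + β * lam) ^ (Fintype.card V * k) *
        isingZ G β (lam * ((β + lam) / (1 + β * lam)) ^ k) := by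
  classical
  have h1 : (0:ℝ) < 1 + β * lam := by positivity
  have hkey : ∀ σ : V → Bool,
      (∑ τ : V × Fin k → Bool,
        β ^ (Finset.univ.filter fun x : V × Fin k => τ x ≠ σ x.1).card * lam ^ plusCount τ)
        = ((β + lam) ^ k) ^ plusCount σ *
          ((1 + β * lam) ^ k) ^ (Fintype.card V - plusCount σ) := by
    intro σ
    have step1 : ∀ τ : V × Fin k → Bool,
        β ^ (Finset.univ.filter fun x : V × Fin k => τ x ≠ σ x.1).card * lam ^ plusCount τ
          = ∏ x : V × Fin k,
              ((if τ x ≠ σ x.1 then β else 1) * (if τ x = true then lam else 1)) := by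
      intro τ
      rw [Finset.prod_mul_distrib, Finset.prod_ite, Finset.prod_const, Finset.prod_const,
        Finset.prod_ite, Finset.prod_const, Finset.prod_const, one_pow, mul_one, one_pow,
        mul_one]
      rfl
    simp only [step1]
    rw [← Fintype.piFinset_univ, ← Finset.prod_univ_sum
      (t := fun _ : V × Fin k => (Finset.univ : Finset Bool))
      (f := fun i b => (if b ≠ σ i.1 then β else 1) * (if b = true then lam else 1))]
    have step2 : ∀ x : V × Fin k,
        (∑ b ∈ (Finset.univ : Finset Bool),
            (if b ≠ σ x.1 then β else 1) * (if b = true then lam else 1))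
          = if σ x.1 = true then β + lam else 1 + β * lam := by
      intro x
      cases h : σ x.1 <;> simp [Fintype.sum_bool, h] <;> ring
    simp only [step2]
    rw [Fintype.prod_prod_type]
    dsimp only
    rw [Finset.prod_congr rfl fun x _ =>
      Finset.prod_const (s := Finset.univ) (if σ x = true then β + lam else 1 + β * lam)]
    simp only [Finset.card_univ, Fintype.card_fin]
    have step3 : ∀ v : V, (if σ v = true then β + lam else 1 + β * lam) ^ k
        = if σ v = true then (β + lam) ^ k else (1 + β * lam) ^ k :=
      fun v => apply_ite (· ^ k) _ _ _
    simp only [step3]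
    rw [Finset.prod_ite, Finset.prod_const, Finset.prod_const]
    have hcard : (Finset.univ.filter fun v => ¬ σ v = true).card
        = Fintype.card V - plusCount σ := by
      have := Finset.card_filter_add_card_filter_not
        (s := (Finset.univ : Finset V)) (p := fun v => σ v = true)
      unfold plusCount
      rw [Finset.card_univ] at this
      omega
    rw [hcard]
    rfl
  rw [isingZ, ← Equiv.sum_comp (Equiv.sumArrowEquivProdArrow V (V × Fin k) Bool).symm,
    Fintype.sum_prod_type]
  simp only [Equiv.sumArrowEquivProdArrow, Equiv.coe_fn_symm_mk, disagree_pendant,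
    plus_pendant]
  rw [isingZ, Finset.mul_sum]
  refine Finset.sum_congr rfl fun σ _ => ?_
  have h2 : ∀ τ : V × Fin k → Bool,
      β ^ (disagreements G σ + (Finset.univ.filter fun x : V × Fin k => τ x ≠ σ x.1).card) *
        lam ^ (plusCount σ + plusCount τ)
        = (β ^ disagreements G σ * lam ^ plusCount σ) *
          (β ^ (Finset.univ.filter fun x : V × Fin k => τ x ≠ σ x.1).card *
            lam ^ plusCount τ) := by
    intro τ; rw [pow_add, pow_add]; ring
  simp only [h2]
  rw [← Finset.mul_sum, hkey σ]
  have hp : plusCount σ ≤ Fintype.card V := by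
    unfold plusCount
    exact (Finset.card_filter_le _ _).trans_eq Finset.card_univ
  have hpow : ((1 + β * lam) ^ k) ^ (Fintype.card V - plusCount σ) *
      ((1 + β * lam) ^ k) ^ plusCount σ = (1 + β * lam) ^ (Fintype.card V * k) := by
    rw [← pow_add, Nat.sub_add_cancel hp, ← pow_mul, mul_comm k]
  rw [← hpow, mul_pow]
  simp only [div_pow]
  field_simp
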